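/- Let G be a finite non-abelian group of order p²q with p < q primes. Then either |Cent(G)| = q + 2, or G is isomorphic to the alternating group A₄ (in which case |Cent(G)| = 6). -/

import Mathlib

def Cent (G : Type*) [Group G] : Set (Subgroup G) :=
  {H | ∃ x : G, H = Subgroup.centralizer {x}}

lemma map_centralizer_singleton {G H : Type*} [Group G] [Group H] (e : G ≃* H) (x : G) :
    Subgroup.map e.toMonoidHom (Subgroup.centralizer {x}) = Subgroup.centralizer {e x} := by
  ext y
  simp only [Subgroup.mem_map, Subgroup.mem_centralizer_iff, Set.mem_singleton_iff, forall_eq,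
    MulEquiv.coe_toMonoidHom]
  constructor
  · rintro ⟨g, hg, rfl⟩
    rw [← map_mul, hg, map_mul]
  · intro hy
    refine ⟨e.symm y, e.injective ?_, e.apply_symm_apply y⟩
    rw [map_mul, map_mul, e.apply_symm_apply, hy]

lemma cent_ncard_congr {G H : Type*} [Group G] [Group H] (e : G ≃* H) :
    (Cent H).ncard = (Cent G).ncard := by
  have hmap : Cent H = (Subgroup.map e.toMonoidHom) '' (Cent G) := by
    ext K
    constructor
    · rintro ⟨y, rfl⟩
      exact ⟨Subgroup.centralizer {e.symm y}, ⟨e.symm y, rfl⟩,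
        by rw [map_centralizer_singleton, e.apply_symm_apply]⟩
    · rintro ⟨K', ⟨x, rfl⟩, rfl⟩
      exact ⟨e x, map_centralizer_singleton e x⟩
  rw [hmap, Set.ncard_image_of_injective _ (Subgroup.map_injective e.injective)]

lemma ncard_range_eq_image_card {α β γ : Type*} [Fintype α] [DecidableEq γ]
    (f : α → β) (g : α → γ) (h : ∀ a b, f a = f b ↔ g a = g b) :
    (Set.range f).ncard = (Finset.univ.image g).card := by
  classical
  have h2 : ((Finset.univ.image g : Finset γ) : Set γ) = Set.range g := by
    simp [Set.image_univ]
  have h3 : (Set.range f).ncard = (Set.range g).ncard := by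
    rw [← Nat.card_coe_set_eq, ← Nat.card_coe_set_eq]
    refine Nat.card_congr ?_
    refine ⟨fun b => ⟨g b.2.choose, ⟨_, rfl⟩⟩, fun c => ⟨f c.2.choose, ⟨_, rfl⟩⟩, ?_, ?_⟩
    · rintro ⟨b, hb⟩
      apply Subtype.ext
      simp only
      set c : Set.range g := ⟨g hb.choose, ⟨_, rfl⟩⟩ with hc
      have h4 : g c.2.choose = g hb.choose := c.2.choose_spec
      exact ((h _ _).mpr h4).trans hb.choose_spec
    · rintro ⟨c, hc⟩
      apply Subtype.ext
      simp only
      set b : Set.range f := ⟨f hc.choose, ⟨_, rfl⟩⟩ with hb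
      have h4 : f b.2.choose = f hc.choose := b.2.choose_spec
      exact ((h _ _).mp h4).trans hc.choose_spec
  rw [h3, ← h2, Set.ncard_coe_finset]

lemma cent_A4 : (Cent (alternatingGroup (Fin 4))).ncard = 6 := by
  classical
  have h1 : Cent (alternatingGroup (Fin 4)) =
      Set.range (fun x : alternatingGroup (Fin 4) => Subgroup.centralizer {x}) := by
    ext K; exact ⟨fun ⟨x, hx⟩ => ⟨x, hx.symm⟩, fun ⟨x, hx⟩ => ⟨x, hx.symm⟩⟩
  rw [h1, ncard_range_eq_image_card _
    (fun x : alternatingGroup (Fin 4) =>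
      Finset.univ.filter (fun y : alternatingGroup (Fin 4) => x*y = y*x)) ?_]
  · decide
  · intro a b
    simp only [SetLike.ext_iff, Finset.ext_iff, Subgroup.mem_centralizer_iff,
      Set.mem_singleton_iff, forall_eq, Finset.mem_filter, Finset.mem_univ, true_and]


section GroupHelpers
variable {G : Type*} [Group G] [Finite G]

lemma comm_of_decomp (P Q : Subgroup G)
    (hm : Nat.card P * Nat.card Q = Nat.card G) (hd : P ⊓ Q = ⊥)
    (hP : ∀ a b : G, a ∈ P → b ∈ P → a * b = b * a)
    (hQc : ∀ a b : G, a ∈ Q → b ∈ Q → a * b = b * a)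
    (hPQ : ∀ a b : G, a ∈ P → b ∈ Q → a * b = b * a) :
    ∀ a b : G, a * b = b * a := by
  let f : P × Q →* G :=
  { toFun := fun x => (x.1 : G) * x.2
    map_one' := by simp
    map_mul' := by
      rintro ⟨⟨a, ha⟩, ⟨u, hu⟩⟩ ⟨⟨b, hb⟩, ⟨v, hv⟩⟩
      simp only [Prod.mk_mul_mk, Subgroup.coe_mul]
      rw [mul_assoc a b (u*v), ← mul_assoc b u v, hPQ b u hb hu, mul_assoc u b v, ← mul_assoc]
  }
  have hker : ∀ x : P × Q, f x = 1 → x = 1 := by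
    rintro ⟨⟨a, ha⟩, ⟨u, hu⟩⟩ hx
    have hx' : a * u = 1 := hx
    have ha' : a ∈ P ⊓ Q := Subgroup.mem_inf.mpr ⟨ha, by
      rw [show a = u⁻¹ from eq_inv_of_mul_eq_one_left hx']; exact inv_mem hu⟩
    rw [hd, Subgroup.mem_bot] at ha'
    have hu' : u = 1 := by rwa [ha', one_mul] at hx'
    simp [Prod.ext_iff, Subtype.ext_iff, ha', hu']
  have hinj : Function.Injective f :=
    (MonoidHom.ker_eq_bot_iff f).mp ((Subgroup.eq_bot_iff_forall _).mpr hker)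
  have hbij : Function.Bijective f :=
    (Nat.bijective_iff_injective_and_card f).mpr ⟨hinj, by rw [Nat.card_prod, hm]⟩
  intro g h
  obtain ⟨⟨⟨x, hx⟩, ⟨u, hu⟩⟩, rfl⟩ := hbij.surjective g
  obtain ⟨⟨⟨y, hy⟩, ⟨v, hv⟩⟩, rfl⟩ := hbij.surjective h
  show (x * u) * (y * v) = (y * v) * (x * u)
  have h1 : Commute x v := hPQ x v hx hv
  have h2 : Commute y u := (hPQ y u hy hu)
  have h3 : Commute x y := hP x y hx hy
  have h4 : Commute u v := hQc u v hu hv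
  exact ((h3.mul_right h1).mul_left (h2.symm.mul_right h4)).eq

lemma comm_of_card_sq {p : ℕ} (hp : p.Prime) (P : Subgroup G) (hcard : Nat.card P = p ^ 2) :
    ∀ a b : G, a ∈ P → b ∈ P → a * b = b * a := by
  haveI := Fact.mk hp
  intro a b ha hb
  exact congrArg Subtype.val
    (IsPGroup.commutative_of_card_eq_prime_sq hcard ⟨a, ha⟩ ⟨b, hb⟩)

lemma comm_of_card_prime {q : ℕ} (hq : q.Prime) (Q : Subgroup G) (hcard : Nat.card Q = q) :
    ∀ a b : G, a ∈ Q → b ∈ Q → a * b = b * a := by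
  haveI := Fact.mk hq
  haveI := isCyclic_of_prime_card hcard
  letI : CommGroup Q := IsCyclic.commGroup
  intro a b ha hb
  exact congrArg Subtype.val (mul_comm (⟨a, ha⟩ : Q) ⟨b, hb⟩)

end GroupHelpers

lemma isPGroup_zpowers_of_pow {G : Type*} [Group G] {p k : ℕ} {x : G} (h : x ^ p ^ k = 1) :
    IsPGroup p (Subgroup.zpowers x) := by
  intro y
  refine ⟨k, ?_⟩
  obtain ⟨n, hn⟩ := Subgroup.mem_zpowers_iff.mp y.2
  have hy : (y : G) ^ (p ^ k : ℕ) = 1 := by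
    rw [← hn, ← zpow_natCast (x ^ n) (p ^ k), ← zpow_mul, mul_comm, zpow_mul,
      zpow_natCast, h, one_zpow]
  exact Subtype.ext (by rw [SubgroupClass.coe_pow]; exact hy)

set_option maxHeartbeats 1000000 in
lemma caseB {G : Type*} [Group G] [Finite G] (p q : ℕ)
    (hp : p.Prime) (hq : q.Prime) (hpq : p < q)
    (hcard : Nat.card G = p ^ 2 * q)
    (hna : ¬ ∀ a b : G, a * b = b * a)
    (Q : Sylow q G) (hQn : (Q : Subgroup G).Normal) :
    (Cent G).ncard = q + 2 := by
  classical
  haveI := Fact.mk hp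
  haveI := Fact.mk hq
  haveI : Finite (Subgroup G) :=
    Finite.of_injective (fun H : Subgroup G => (H : Set G)) SetLike.coe_injective
  have hpne : p ≠ q := hpq.ne
  have hp0 : p ≠ 0 := hp.pos.ne'
  have hq0 : q ≠ 0 := hq.pos.ne'
  -- cards of Sylow subgroups
  have hfq : (Nat.card G).factorization q = 1 := by
    rw [hcard, Nat.factorization_mul (pow_ne_zero 2 hp0) hq0,
      Nat.factorization_pow, hp.factorization, hq.factorization]
    simp [Finsupp.single_apply, hpne, Ne.symm hpne]
  have hfp : (Nat.card G).factorization p = 2 := by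
    rw [hcard, Nat.factorization_mul (pow_ne_zero 2 hp0) hq0,
      Nat.factorization_pow, hp.factorization, hq.factorization]
    simp [Finsupp.single_apply, hpne, Ne.symm hpne]
  have hcardQ : Nat.card Q = q := by
    rw [Q.card_eq_multiplicity, hfq, pow_one]
  have hcardSyl : ∀ P₀ : Sylow p G, Nat.card P₀ = p ^ 2 := fun P₀ => by
    rw [P₀.card_eq_multiplicity, hfp]
  -- every q-torsion element is in Q
  haveI hQuniq := Sylow.unique_of_normal Q hQn
  have hmemQ : ∀ g : G, g ^ q = 1 → g ∈ (Q : Subgroup G) := by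
    intro g hg
    have hpg : IsPGroup q (Subgroup.zpowers g) := isPGroup_zpowers_of_pow (k := 1) (by rwa [pow_one])
    obtain ⟨R, hR⟩ := hpg.exists_le_sylow
    have hRQ : R = Q := Subsingleton.elim R Q
    exact hRQ ▸ hR (Subgroup.mem_zpowers g)
  -- the centralizer of Q
  set C : Subgroup G := Subgroup.centralizer ((Q : Subgroup G) : Set G) with hC
  have hQcomm := comm_of_card_prime hq (Q : Subgroup G) hcardQ
  have hQleC : (Q : Subgroup G) ≤ C := fun u hu =>
    Subgroup.mem_centralizer_iff.mpr (fun m hm => hQcomm m u hm hu)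
  -- Q is not central
  have hcop : Nat.Coprime (p ^ 2) q := ((Nat.coprime_primes hp hq).mpr hpne).pow_left 2
  have hQnotCentral : ¬ (Q : Subgroup G) ≤ Subgroup.center G := by
    intro hle
    obtain ⟨P₀⟩ : Nonempty (Sylow p G) := inferInstance
    apply hna
    refine comm_of_decomp (P₀ : Subgroup G) (Q : Subgroup G) ?_ ?_
      (comm_of_card_sq hp _ (hcardSyl P₀)) hQcomm ?_
    · rw [hcardSyl P₀, hcardQ, hcard]
    · exact Subgroup.inf_eq_bot_of_coprime (by rw [hcardSyl P₀, hcardQ]; exact hcop)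
    · intro a b _ hb
      exact (Subgroup.mem_center_iff.mp (hle hb) a)
  have hCneTop : C ≠ ⊤ := by
    intro h
    refine hQnotCentral (fun u hu => Subgroup.mem_center_iff.mpr (fun g => ?_))
    have hgC : g ∈ C := h ▸ Subgroup.mem_top g
    exact ((Subgroup.mem_centralizer_iff.mp hgC) u hu).symm
  -- card C
  have hqdvdC : q ∣ Nat.card C := hcardQ ▸ Subgroup.card_dvd_of_le hQleC
  have hCdvdG : Nat.card C ∣ p ^ 2 * q := hcard ▸ Subgroup.card_subgroup_dvd_card C
  have hcardC : Nat.card C = q ∨ Nat.card C = p * q := by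
    obtain ⟨d, hd⟩ := hqdvdC
    have hdp : d ∣ p ^ 2 := by
      have h2 : q * d ∣ q * p ^ 2 := by
        rw [← hd, mul_comm q (p ^ 2)]; exact hCdvdG
      exact (mul_dvd_mul_iff_left hq0).mp h2
    obtain ⟨i, hi2, rfl⟩ := (Nat.dvd_prime_pow hp).mp hdp
    interval_cases i
    · left; simpa using hd
    · right; rw [hd, pow_one, mul_comm]
    · exfalso
      apply hCneTop
      apply Subgroup.eq_top_of_card_eq
      rw [hd, hcard]; ring
  -- F1: anything commuting with a nontrivial element of Q lies in C
  have hF1 : ∀ u : G, u ∈ (Q : Subgroup G) → u ≠ 1 → ∀ a : G, a * u = u * a → a ∈ C := by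
    intro u hu hune a hcomm
    set S := (Q : Subgroup G) ⊓ Subgroup.centralizer {a} with hS
    have huS : u ∈ S := Subgroup.mem_inf.mpr ⟨hu,
      Subgroup.mem_centralizer_iff.mpr (by simpa using hcomm)⟩
    have hcardS : Nat.card S ∣ q := hcardQ ▸ Subgroup.card_dvd_of_le inf_le_left
    have hSq : Nat.card S = q := by
      rcases (hq.eq_one_or_self_of_dvd _ hcardS) with h1 | h
      · exact absurd (Subgroup.mem_bot.mp (Subgroup.card_eq_one.mp h1 ▸ huS)) hune
      · exact h
    have hSeq : S = (Q : Subgroup G) :=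
      Subgroup.eq_of_le_of_card_ge inf_le_left (by rw [hSq, hcardQ])
    have hQa : (Q : Subgroup G) ≤ Subgroup.centralizer {a} := hSeq ▸ inf_le_right
    exact Subgroup.mem_centralizer_iff.mpr
      (fun m hm => ((Subgroup.mem_centralizer_iff.mp (hQa hm)) a rfl).symm)
  -- C is abelian
  have hCcomm : ∀ a b : G, a ∈ C → b ∈ C → a * b = b * a := by
    set N := (Q : Subgroup G).subgroupOf C with hN
    haveI hNn : N.Normal := hQn.subgroupOf C
    have hNcard : Nat.card N = q := by
      rw [Nat.card_congr (Subgroup.subgroupOfEquivOfLe hQleC).toEquiv, hcardQ]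
    have hNle : N ≤ Subgroup.center C := by
      intro x hx
      refine Subgroup.mem_center_iff.mpr (fun c => ?_)
      have hxQ : (x : G) ∈ (Q : Subgroup G) := Subgroup.mem_subgroupOf.mp hx
      exact Subtype.ext (((Subgroup.mem_centralizer_iff.mp c.2) x hxQ).symm)
    have hquot : Nat.card (C ⧸ N) = 1 ∨ Nat.card (C ⧸ N) = p := by
      have hmul := Subgroup.card_eq_card_quotient_mul_card_subgroup N
      rw [hNcard] at hmul
      rcases hcardC with h | h <;> rw [h] at hmul
      · left
        apply Nat.eq_of_mul_eq_mul_right hq.pos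
        rw [one_mul]; exact hmul.symm
      · right
        have hqpos : 0 < q := hq.pos
        have : p * q = Nat.card (C ⧸ N) * q := hmul
        exact (Nat.eq_of_mul_eq_mul_right hqpos this).symm
    haveI hcyc : IsCyclic (C ⧸ N) := by
      rcases hquot with h | h
      · haveI := (Nat.card_eq_one_iff_unique.mp h).1
        infer_instance
      · exact isCyclic_of_prime_card h
    intro a b ha hb
    exact congrArg Subtype.val
      (commutative_of_cyclic_center_quotient (QuotientGroup.mk' N)
        (by rw [QuotientGroup.ker_mk']; exact hNle) ⟨a, ha⟩ ⟨b, hb⟩)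
  -- U1
  have hU1 : ∀ x : G, x ∈ C → x ∉ Subgroup.center G → Subgroup.centralizer {x} = C := by
    intro x hxC hxZ
    have hx1 : x ≠ 1 := fun h => hxZ (h ▸ (Subgroup.center G).one_mem)
    have h1 : C ≤ Subgroup.centralizer {x} := fun c hc =>
      Subgroup.mem_centralizer_iff.mpr (by
        simp only [Set.mem_singleton_iff, forall_eq]
        exact hCcomm x c hxC hc)
    have h2 : Subgroup.centralizer {x} ≤ C := by
      intro g hg
      have hgx : x * g = g * x := (Subgroup.mem_centralizer_iff.mp hg) x rfl
      have hxo : orderOf x ∣ p * q := by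
        have ho1 : orderOf (⟨x, hxC⟩ : C) ∣ Nat.card C := orderOf_dvd_natCard _
        rw [Subgroup.orderOf_mk] at ho1
        rcases hcardC with h | h <;> rw [h] at ho1
        · exact ho1.trans (Dvd.intro_left p rfl)
        · exact ho1
      have hordx : x ^ (p * q) = 1 := orderOf_dvd_iff_pow_eq_one.mp hxo
      by_cases hxp : x ^ p = 1
      · exfalso
        have hpg : IsPGroup p (Subgroup.zpowers x) :=
          isPGroup_zpowers_of_pow (k := 1) (by rwa [pow_one])
        obtain ⟨P₀, hP₀⟩ := hpg.exists_le_sylow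
        have hxP₀ : x ∈ (P₀ : Subgroup G) := hP₀ (Subgroup.mem_zpowers x)
        have hPcomm := comm_of_card_sq hp (P₀ : Subgroup G) (hcardSyl P₀)
        have hPle : (P₀ : Subgroup G) ≤ Subgroup.centralizer {x} := fun c hc =>
          Subgroup.mem_centralizer_iff.mpr (by
            simp only [Set.mem_singleton_iff, forall_eq]
            exact hPcomm x c hxP₀ hc)
        have hn1 : p ^ 2 ∣ Nat.card (Subgroup.centralizer {x}) :=
          hcardSyl P₀ ▸ Subgroup.card_dvd_of_le hPle
        have hn2 : q ∣ Nat.card (Subgroup.centralizer {x}) :=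
          hqdvdC.trans (Subgroup.card_dvd_of_le h1)
        have hn3 : Nat.card (Subgroup.centralizer {x}) ∣ p ^ 2 * q :=
          hcard ▸ Subgroup.card_subgroup_dvd_card _
        have hn4 : p ^ 2 * q ∣ Nat.card (Subgroup.centralizer {x}) :=
          hcop.mul_dvd_of_dvd_of_dvd hn1 hn2
        have heq : Subgroup.centralizer {x} = ⊤ :=
          Subgroup.eq_top_of_card_eq _ (by rw [Nat.dvd_antisymm hn3 hn4, hcard])
        apply hxZ
        refine Subgroup.mem_center_iff.mpr (fun g => ?_)
        have : g ∈ Subgroup.centralizer {x} := heq ▸ Subgroup.mem_top g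
        exact ((Subgroup.mem_centralizer_iff.mp this) x rfl).symm
      · have hyq : (x ^ p) ^ q = 1 := by rw [← pow_mul]; exact hordx
        have hyQ : x ^ p ∈ (Q : Subgroup G) := hmemQ _ hyq
        have hgy : g * x ^ p = x ^ p * g := by
          have hcomm0 : Commute x g := hgx
          exact (hcomm0.symm.pow_right p).eq
        exact hF1 (x ^ p) hyQ hxp g hgy
    exact le_antisymm h2 h1
  -- U2
  have hU2 : ∀ x : G, x ∉ C → ∃ P₀ : Sylow p G, Subgroup.centralizer {x} = ↑P₀ := by
    intro x hx
    have hndvd : ¬ q ∣ Nat.card (Subgroup.centralizer {x}) := by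
      intro hdvd
      obtain ⟨c, hc⟩ := exists_prime_orderOf_dvd_card' (G := Subgroup.centralizer {x}) q hdvd
      have hu : orderOf (c : G) = q := by rw [Subgroup.orderOf_coe]; exact hc
      have huQ : (c : G) ∈ (Q : Subgroup G) := hmemQ _ (by rw [← hu]; exact pow_orderOf_eq_one _)
      have hune : (c : G) ≠ 1 := by
        intro h
        rw [h, orderOf_one] at hu
        exact hq.one_lt.ne hu
      have hcx : x * (c : G) = (c : G) * x := (Subgroup.mem_centralizer_iff.mp c.2) x rfl
      exact hx (hF1 c huQ hune x hcx)
    have hn3 : Nat.card (Subgroup.centralizer {x}) ∣ p ^ 2 * q :=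
      hcard ▸ Subgroup.card_subgroup_dvd_card _
    have hdvd2 : Nat.card (Subgroup.centralizer {x}) ∣ p ^ 2 :=
      (Nat.Coprime.dvd_of_dvd_mul_right
        (((hq.coprime_iff_not_dvd).mpr hndvd).symm) hn3)
    have hxmem : x ∈ Subgroup.centralizer {x} :=
      Subgroup.mem_centralizer_iff.mpr (by simp)
    have hxpow : x ^ p ^ 2 = 1 := by
      apply orderOf_dvd_iff_pow_eq_one.mp
      exact (Subgroup.orderOf_mk x hxmem ▸ orderOf_dvd_natCard (⟨x, hxmem⟩ :
        Subgroup.centralizer {x})).trans hdvd2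
    have hpg : IsPGroup p (Subgroup.zpowers x) := isPGroup_zpowers_of_pow hxpow
    obtain ⟨P₀, hP₀⟩ := hpg.exists_le_sylow
    have hxP₀ : x ∈ (P₀ : Subgroup G) := hP₀ (Subgroup.mem_zpowers x)
    have hPcomm := comm_of_card_sq hp (P₀ : Subgroup G) (hcardSyl P₀)
    have hPle : (P₀ : Subgroup G) ≤ Subgroup.centralizer {x} := fun c hc =>
      Subgroup.mem_centralizer_iff.mpr (by
        simp only [Set.mem_singleton_iff, forall_eq]
        exact hPcomm x c hxP₀ hc)
    refine ⟨P₀, (Subgroup.eq_of_le_of_card_ge hPle ?_).symm⟩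
    rw [hcardSyl P₀]
    exact Nat.le_of_dvd (by positivity) hdvd2
  -- every Sylow p arises
  have hU2' : ∀ P₀ : Sylow p G, ∃ x : G, x ∉ C ∧ Subgroup.centralizer {x} = ↑P₀ := by
    intro P₀
    have hnle : ¬ (P₀ : Subgroup G) ≤ C := by
      intro hle
      have hdv : p ^ 2 ∣ Nat.card C := hcardSyl P₀ ▸ Subgroup.card_dvd_of_le hle
      have hpq' : p ∣ q := by
        rcases hcardC with h | h <;> rw [h] at hdv
        · exact dvd_trans (dvd_pow_self p two_ne_zero) hdv
        · have h3 : p * p ∣ p * q := by rwa [← pow_two]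
          exact (mul_dvd_mul_iff_left hp0).mp h3
      exact hpne ((Nat.prime_dvd_prime_iff_eq hp hq).mp hpq')
    obtain ⟨x, hxP, hxC⟩ := SetLike.not_le_iff_exists.mp hnle
    obtain ⟨P₁, hP₁⟩ := hU2 x hxC
    have hPcomm := comm_of_card_sq hp (P₀ : Subgroup G) (hcardSyl P₀)
    have hPle : (P₀ : Subgroup G) ≤ Subgroup.centralizer {x} := fun c hc =>
      Subgroup.mem_centralizer_iff.mpr (by
        simp only [Set.mem_singleton_iff, forall_eq]
        exact hPcomm x c hxP hc)
    have hle' : (P₀ : Subgroup G) ≤ (P₁ : Subgroup G) := hP₁ ▸ hPle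
    have heq : (P₀ : Subgroup G) = (P₁ : Subgroup G) :=
      Subgroup.eq_of_le_of_card_ge hle' (by rw [hcardSyl P₀, hcardSyl P₁])
    exact ⟨x, hxC, by rw [hP₁, heq]⟩
  -- number of Sylow p subgroups is q
  have hnp : Nat.card (Sylow p G) = q := by
    obtain ⟨P₀⟩ : Nonempty (Sylow p G) := inferInstance
    have hidx : (P₀ : Subgroup G).index = q := by
      have hmi := Subgroup.card_mul_index (P₀ : Subgroup G)
      rw [hcardSyl P₀, hcard] at hmi
      exact Nat.eq_of_mul_eq_mul_left (by positivity) hmi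
    have hdvd := P₀.card_dvd_index
    rw [hidx] at hdvd
    rcases hq.eq_one_or_self_of_dvd _ hdvd with h1 | h
    swap
    · exact h
    exfalso
    haveI : Subsingleton (Sylow p G) := (Nat.card_eq_one_iff_unique.mp h1).1
    have hP₀n : (P₀ : Subgroup G).Normal := by
      rw [← Subgroup.normalizer_eq_top_iff]
      rw [eq_top_iff]
      intro g _
      refine Sylow.smul_eq_iff_mem_normalizer.mp ?_
      exact Subsingleton.elim _ _
    apply hna
    refine comm_of_decomp (P₀ : Subgroup G) (Q : Subgroup G) ?_ ?_
      (comm_of_card_sq hp _ (hcardSyl P₀)) hQcomm ?_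
    · rw [hcardSyl P₀, hcardQ, hcard]
    · exact Subgroup.inf_eq_bot_of_coprime (by rw [hcardSyl P₀, hcardQ]; exact hcop)
    · intro a b ha hb
      set c := a * b * a⁻¹ * b⁻¹ with hc'
      have hcQ : c ∈ (Q : Subgroup G) := by
        have h1 : a * b * a⁻¹ ∈ (Q : Subgroup G) := hQn.conj_mem b hb a
        exact mul_mem h1 (inv_mem hb)
      have hcP : c ∈ (P₀ : Subgroup G) := by
        have h1 : b * a⁻¹ * b⁻¹ ∈ (P₀ : Subgroup G) := hP₀n.conj_mem a⁻¹ (inv_mem ha) b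
        have h2 := mul_mem ha h1
        have h3 : a * (b * a⁻¹ * b⁻¹) = c := by simp only [hc', mul_assoc]
        rwa [h3] at h2
      have hcbot : c ∈ (P₀ : Subgroup G) ⊓ (Q : Subgroup G) := Subgroup.mem_inf.mpr ⟨hcP, hcQ⟩
      rw [Subgroup.inf_eq_bot_of_coprime (by rw [hcardSyl P₀, hcardQ]; exact hcop),
        Subgroup.mem_bot] at hcbot
      have h1 : a * b * a⁻¹ = b := mul_inv_eq_one.mp hcbot
      exact mul_inv_eq_iff_eq_mul.mp h1
  -- an element of C outside the center
  have hCnotcen : ¬ C ≤ Subgroup.center G := fun h => hQnotCentral (hQleC.trans h)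
  obtain ⟨x₀, hx₀C, hx₀Z⟩ := SetLike.not_le_iff_exists.mp hCnotcen
  -- description of Cent G
  have hCent : Cent G =
      insert ⊤ (insert C (Set.range (fun P₀ : Sylow p G => (P₀ : Subgroup G)))) := by
    ext H
    constructor
    · rintro ⟨x, rfl⟩
      by_cases hx1 : x ∈ C
      · by_cases hx2 : x ∈ Subgroup.center G
        · refine Set.mem_insert_iff.mpr (Or.inl ?_)
          rw [eq_top_iff]
          intro g _
          refine Subgroup.mem_centralizer_iff.mpr ?_
          simp only [Set.mem_singleton_iff, forall_eq]
          exact (Subgroup.mem_center_iff.mp hx2 g).symm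
        · exact Set.mem_insert_iff.mpr (Or.inr (Set.mem_insert_iff.mpr (Or.inl (hU1 x hx1 hx2))))
      · obtain ⟨P₀, hP₀⟩ := hU2 x hx1
        exact Set.mem_insert_iff.mpr (Or.inr (Set.mem_insert_iff.mpr (Or.inr ⟨P₀, hP₀.symm⟩)))
    · intro hH
      rcases Set.mem_insert_iff.mp hH with h | hH
      · refine ⟨1, ?_⟩
        rw [h]
        symm
        rw [eq_top_iff]
        intro g _
        refine Subgroup.mem_centralizer_iff.mpr ?_
        simp
      rcases Set.mem_insert_iff.mp hH with h | hH
      · exact ⟨x₀, h ▸ (hU1 x₀ hx₀C hx₀Z).symm⟩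
      · obtain ⟨P₀, hP₀⟩ := hH
        obtain ⟨x, _, hx2⟩ := hU2' P₀
        exact ⟨x, (hx2.trans hP₀).symm⟩
  -- cardinality computation
  have hinj : Function.Injective (fun P₀ : Sylow p G => (P₀ : Subgroup G)) :=
    fun P₁ P₂ h => Sylow.ext h
  have hrange : (Set.range (fun P₀ : Sylow p G => (P₀ : Subgroup G))).ncard = q := by
    rw [← Set.image_univ, Set.ncard_image_of_injective _ hinj, Set.ncard_univ, hnp]
  have hTopCard : Nat.card (⊤ : Subgroup G) = p ^ 2 * q := by
    rw [Subgroup.card_top, hcard]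
  have hTnotmem : (⊤ : Subgroup G) ∉
      insert C (Set.range (fun P₀ : Sylow p G => (P₀ : Subgroup G))) := by
    intro h
    rcases Set.mem_insert_iff.mp h with h | ⟨P₀, hP₀⟩
    · exact hCneTop h.symm
    · have h2 := hcardSyl P₀
      have h3 : (P₀ : Subgroup G) = ⊤ := hP₀
      rw [h3, hTopCard] at h2
      have h4 : q = 1 := Nat.eq_of_mul_eq_mul_left (pow_pos hp.pos 2)
        (h2.trans (mul_one (p ^ 2)).symm)
      exact hq.one_lt.ne' h4
  have hCnotmem : C ∉ Set.range (fun P₀ : Sylow p G => (P₀ : Subgroup G)) := by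
    rintro ⟨P₀, hP₀⟩
    have h2 := hcardSyl P₀
    have h3 : (P₀ : Subgroup G) = C := hP₀
    rw [h3] at h2
    rcases hcardC with h | h <;> rw [h2] at h
    · -- p ^ 2 = q
      have : p ∣ q := h ▸ dvd_pow_self p two_ne_zero
      exact hpne ((Nat.prime_dvd_prime_iff_eq hp hq).mp this)
    · -- p ^ 2 = p * q
      have : p * p = p * q := by rw [← pow_two]; exact h
      exact hpne (Nat.eq_of_mul_eq_mul_left hp.pos this)
  rw [hCent, Set.ncard_insert_of_notMem hTnotmem (Set.toFinite _),
    Set.ncard_insert_of_notMem hCnotmem (Set.toFinite _), hrange]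


lemma caseA {G : Type*} [Group G] [Finite G]
    (hcard : Nat.card G = 12) (hsyl : Nat.card (Sylow 3 G) = 4) :
    Nonempty (G ≃* alternatingGroup (Fin 4)) := by
  classical
  haveI : Fact (Nat.Prime 3) := ⟨by norm_num⟩
  have hfac3 : (Nat.card G).factorization 3 = 1 := by
    rw [hcard, show (12 : ℕ) = 2 ^ 2 * 3 by norm_num,
      Nat.factorization_mul (by norm_num) (by norm_num), Nat.factorization_pow,
      Nat.Prime.factorization (by norm_num), Nat.Prime.factorization (by norm_num)]
    simp [Finsupp.single_apply]
  have hcardQ : ∀ Q : Sylow 3 G, Nat.card Q = 3 := fun Q => by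
    rw [Q.card_eq_multiplicity, hfac3, pow_one]
  have hnorm : ∀ Q : Sylow 3 G, (Subgroup.normalizer ((Q : Subgroup G) : Set G)) = ↑Q := by
    intro Q
    have h1 : (4 : ℕ) = (Subgroup.normalizer ((Q : Subgroup G) : Set G)).index := by
      rw [← hsyl]; exact Q.card_eq_index_normalizer
    have h2 : Nat.card (Subgroup.normalizer ((Q : Subgroup G) : Set G)) * (Subgroup.normalizer ((Q : Subgroup G) : Set G)).index = 12 := by
      rw [Subgroup.card_mul_index, hcard]
    rw [← h1] at h2
    have h3 : Nat.card (Subgroup.normalizer ((Q : Subgroup G) : Set G)) = 3 := by omega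
    exact (Subgroup.eq_of_le_of_card_ge Subgroup.le_normalizer (by rw [h3, hcardQ Q])).symm
  set φ := MulAction.toPermHom G (Sylow 3 G) with hφ
  have hker : φ.ker = ⊥ := by
    rw [Subgroup.eq_bot_iff_forall]
    intro g hg
    have hfix : ∀ Q : Sylow 3 G, g • Q = Q := by
      intro Q
      have h0 : φ g = 1 := hg
      have := congrFun (congrArg (fun (e : Equiv.Perm (Sylow 3 G)) => (e : Sylow 3 G → Sylow 3 G)) h0) Q
      simpa [hφ] using this
    have hmem : ∀ Q : Sylow 3 G, g ∈ (Q : Subgroup G) := by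
      intro Q
      have h1 : g ∈ (Subgroup.normalizer ((Q : Subgroup G) : Set G)) := Sylow.smul_eq_iff_mem_normalizer.mp (hfix Q)
      rwa [hnorm Q] at h1
    haveI : Nontrivial (Sylow 3 G) := by
      by_contra hnt
      rw [not_nontrivial_iff_subsingleton] at hnt
      have h1 := Nat.card_eq_one_iff_unique.mpr ⟨hnt, inferInstance⟩
      omega
    obtain ⟨Q1, Q2, hne⟩ := exists_pair_ne (Sylow 3 G)
    have hbot : (Q1 : Subgroup G) ⊓ (Q2 : Subgroup G) = ⊥ := by
      by_contra hb
      have hd1 : Nat.card ((Q1 : Subgroup G) ⊓ (Q2 : Subgroup G) : Subgroup G) ∣ 3 := by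
        have h0 := Subgroup.card_dvd_of_le (inf_le_left (a := (Q1 : Subgroup G)) (b := (Q2 : Subgroup G)))
        rwa [hcardQ Q1] at h0
      rcases (Nat.prime_three).eq_one_or_self_of_dvd _ hd1 with h1 | h3
      · exact hb (Subgroup.card_eq_one.mp h1)
      · have e1 : (Q1 : Subgroup G) ⊓ (Q2 : Subgroup G) = (Q1 : Subgroup G) :=
          Subgroup.eq_of_le_of_card_ge inf_le_left (by rw [h3, hcardQ Q1])
        have e2 : (Q1 : Subgroup G) ⊓ (Q2 : Subgroup G) = (Q2 : Subgroup G) :=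
          Subgroup.eq_of_le_of_card_ge inf_le_right (by rw [h3, hcardQ Q2])
        exact hne (Sylow.ext (e1.symm.trans e2))
    have : g ∈ ((Q1 : Subgroup G) ⊓ (Q2 : Subgroup G)) :=
      Subgroup.mem_inf.mpr ⟨hmem Q1, hmem Q2⟩
    rw [hbot] at this
    exact Subgroup.mem_bot.mp this
  have hinj : Function.Injective φ := (MonoidHom.ker_eq_bot_iff φ).mp hker
  haveI : Finite (Sylow 3 G) := Nat.finite_of_card_ne_zero (by rw [hsyl]; norm_num)
  let e : Sylow 3 G ≃ Fin 4 := Finite.equivFinOfCardEq hsyl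
  let Ψ : Equiv.Perm (Sylow 3 G) ≃* Equiv.Perm (Fin 4) :=
    { toEquiv := Equiv.permCongr e
      map_mul' := by
        intro σ τ
        ext i
        simp [Equiv.permCongr_apply] }
  let ψ : G →* Equiv.Perm (Fin 4) := Ψ.toMonoidHom.comp φ
  have hψinj : Function.Injective ψ := Ψ.injective.comp hinj
  have hrange : Nat.card ψ.range = 12 := by
    rw [← hcard]
    exact (Nat.card_congr (MonoidHom.ofInjective hψinj).toEquiv).symm
  have hPermCard : Nat.card (Equiv.Perm (Fin 4)) = 24 := by
    rw [Nat.card_eq_fintype_card]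
    decide
  have hidx : ψ.range.index = 2 := by
    have h1 := Subgroup.card_mul_index ψ.range
    rw [hrange, hPermCard] at h1
    omega
  have halt : alternatingGroup (Fin 4) ≤ ψ.range := by
    rw [← Equiv.Perm.closure_three_cycles_eq_alternating, Subgroup.closure_le]
    intro σ hσ
    have ho : orderOf σ = 3 := (hσ : Equiv.Perm.IsThreeCycle σ).orderOf
    have hσ3 : σ ^ 3 = 1 := by rw [← ho]; exact pow_orderOf_eq_one σ
    have hσ4 : (σ ^ 2) ^ 2 = σ := by
      rw [← pow_mul]
      have : σ ^ 4 = σ ^ 3 * σ := by rw [pow_succ]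
      rw [show (2 * 2 : ℕ) = 4 from rfl, this, hσ3, one_mul]
    have hmem := Subgroup.sq_mem_of_index_two hidx (σ ^ 2)
    rw [hσ4] at hmem
    exact hmem
  have hA12 : Nat.card (alternatingGroup (Fin 4)) = 12 := by
    rw [Nat.card_eq_fintype_card]
    have h2 := two_mul_card_alternatingGroup (α := Fin 4)
    have h24 : Fintype.card (Equiv.Perm (Fin 4)) = 24 := by decide
    omega
  have heq : alternatingGroup (Fin 4) = ψ.range :=
    Subgroup.eq_of_le_of_card_ge halt (by rw [hrange, hA12])
  exact ⟨(MonoidHom.ofInjective hψinj).trans (MulEquiv.subgroupCongr heq.symm)⟩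


theorem card_cent_of_order_p_sq_q
    (G : Type*) [Group G] [Finite G] (p q : ℕ)
    (hp : p.Prime) (hq : q.Prime) (hpq : p < q)
    (hcard : Nat.card G = p ^ 2 * q)
    (hna : ¬ ∀ a b : G, a * b = b * a) :
    (Cent G).ncard = q + 2 ∨
      (Nonempty (G ≃* alternatingGroup (Fin 4)) ∧ (Cent G).ncard = 6) := by
  classical
  haveI := Fact.mk hp
  haveI := Fact.mk hq
  haveI : Finite (Subgroup G) :=
    Finite.of_injective (fun H : Subgroup G => (H : Set G)) SetLike.coe_injective
  haveI : Finite (Sylow q G) :=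
    Finite.of_injective (fun P : Sylow q G => (P : Subgroup G)) (fun _ _ h => Sylow.ext h)
  have hpne : p ≠ q := hpq.ne
  have hp0 : p ≠ 0 := hp.pos.ne'
  have hq0 : q ≠ 0 := hq.pos.ne'
  obtain ⟨Q⟩ : Nonempty (Sylow q G) := inferInstance
  have hfq : (Nat.card G).factorization q = 1 := by
    rw [hcard, Nat.factorization_mul (pow_ne_zero 2 hp0) hq0,
      Nat.factorization_pow, hp.factorization, hq.factorization]
    simp [Finsupp.single_apply, hpne, Ne.symm hpne]
  have hcardQ : Nat.card Q = q := by
    rw [Q.card_eq_multiplicity, hfq, pow_one]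
  have hidx : (Q : Subgroup G).index = p ^ 2 := by
    have hmi := Subgroup.card_mul_index (Q : Subgroup G)
    rw [hcardQ, hcard] at hmi
    have : q * (Q : Subgroup G).index = q * p ^ 2 := by
      rw [hmi]; ring
    exact Nat.eq_of_mul_eq_mul_left hq.pos this
  have hdvd : Nat.card (Sylow q G) ∣ p ^ 2 := by
    have := Q.card_dvd_index
    rwa [hidx] at this
  have hmod : Nat.card (Sylow q G) ≡ 1 [MOD q] := card_sylow_modEq_one q G
  obtain ⟨i, hi2, hni⟩ := (Nat.dvd_prime_pow hp).mp hdvd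
  interval_cases i
  · -- n_q = 1 : Q is normal
    left
    have h1 : Nat.card (Sylow q G) = 1 := by simpa using hni
    haveI : Subsingleton (Sylow q G) := (Nat.card_eq_one_iff_unique.mp h1).1
    have hQn : (Q : Subgroup G).Normal := by
      rw [← Subgroup.normalizer_eq_top_iff, eq_top_iff]
      intro g _
      refine Sylow.smul_eq_iff_mem_normalizer.mp ?_
      exact Subsingleton.elim _ _
    exact caseB p q hp hq hpq hcard hna Q hQn
  · -- n_q = p : impossible
    exfalso
    rw [hni, pow_one] at hmod
    have hmod' : p % q = 1 % q := hmod
    rw [Nat.mod_eq_of_lt hpq, Nat.mod_eq_of_lt hq.one_lt] at hmod'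
    exact hp.one_lt.ne' hmod'
  · -- n_q = p ^ 2 : G ≅ A₄
    right
    rw [hni] at hmod
    have hp2le : 1 ≤ p ^ 2 := Nat.one_le_pow 2 p hp.pos
    have hq_dvd : q ∣ p ^ 2 - 1 := (Nat.modEq_iff_dvd' hp2le).mp hmod.symm
    have hfact : p ^ 2 - 1 = (p - 1) * (p + 1) := by
      have h1 : 1 ≤ p := hp.pos
      zify [h1, hp2le]
      ring
    rw [hfact] at hq_dvd
    rcases (Nat.Prime.dvd_mul hq).mp hq_dvd with h | h
    · exfalso
      have h2 : 2 ≤ p := hp.two_le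
      have := Nat.le_of_dvd (by omega) h
      omega
    · have hqle : q ≤ p + 1 := Nat.le_of_dvd (by omega) h
      have hqeq : q = p + 1 := by omega
      have hp2 : p = 2 := by
        by_contra hpne2
        have hpodd : p % 2 = 1 := Nat.odd_iff.mp (hp.odd_of_ne_two hpne2)
        have hqeven : 2 ∣ q := by clear hq_dvd h hfact; omega
        have : q = 2 := (Nat.Prime.even_iff hq).mp (even_iff_two_dvd.mpr hqeven)
        have h2 : 2 ≤ p := hp.two_le
        clear hq_dvd h hfact
        omega
      have hq3 : q = 3 := by
        have h2 : 2 ≤ p := hp.two_le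
        clear hq_dvd h hfact
        omega
      subst hp2
      subst hq3
      have hcard12 : Nat.card G = 12 := by rw [hcard]; norm_num
      have hsyl4 : Nat.card (Sylow 3 G) = 4 := by rw [hni]; norm_num
      obtain ⟨eiso⟩ := caseA hcard12 hsyl4
      exact ⟨⟨eiso⟩, (cent_ncard_congr eiso).symm.trans cent_A4⟩
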